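/- Let p be a prime and Γ a solvable transitive subgroup of S_p that is not commutative. Then Γ has exactly p subgroups of index p. -/

import Mathlib

set_option linter.unnecessarySimpa false

open MulAction

theorem stmt_5 (p : ℕ) (hp : p.Prime) (Γ : Subgroup (Equiv.Perm (Fin p)))
    (htrans : ∀ a b : Fin p, ∃ σ ∈ Γ, σ a = b)
    (hsolv : IsSolvable ↥Γ)
    (hnc : ¬ ∀ a b : ↥Γ, a * b = b * a) :
    Nat.card {H : Subgroup ↥Γ // H.index = p} = p := by
  classical
  haveI hfact : Fact p.Prime := ⟨hp⟩
  haveI : NeZero p := ⟨hp.pos.ne'⟩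
  have hp1 : 1 < p := hp.one_lt
  -- transitivity of the action of ↥Γ on Fin p
  haveI hT : IsPretransitive ↥Γ (Fin p) := by
    constructor
    intro a b
    obtain ⟨σ, hσ, h⟩ := htrans a b
    exact ⟨⟨σ, hσ⟩, h⟩
  have hcardX : Nat.card (Fin p) = p := by simp
  -- faithfulness
  have hfaith : ∀ g : ↥Γ, (∀ x : Fin p, g • x = x) → g = 1 := by
    intro g hg
    refine Subtype.ext (Equiv.ext fun x => ?_)
    exact hg x
  -- Γ is nontrivial
  push_neg at hnc
  obtain ⟨a₀, b₀, hab⟩ := hnc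
  haveI hΓnt : Nontrivial ↥Γ := by
    refine ⟨a₀, 1, fun h => hab ?_⟩
    subst h; simp
  -- the last nontrivial term of the derived series
  obtain ⟨n₀, hn₀⟩ := hsolv.solvable
  have hex : ∃ n, derivedSeries ↥Γ (n + 1) = ⊥ ∧ derivedSeries ↥Γ n ≠ ⊥ := by
    have htop : derivedSeries ↥Γ 0 ≠ ⊥ := by
      rw [derivedSeries_zero]
      exact fun h => top_ne_bot h
    induction n₀ with
    | zero => exact absurd hn₀ htop
    | succ k ih =>
      by_cases hk : derivedSeries ↥Γ k = ⊥
      · exact ih hk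
      · exact ⟨k, hn₀, hk⟩
  obtain ⟨m, hA2, hA1⟩ := hex
  set A : Subgroup ↥Γ := derivedSeries ↥Γ m with hAdef
  haveI hAnormal : A.Normal := derivedSeries_normal _ _
  have hAab : ∀ a b : ↥Γ, a ∈ A → b ∈ A → a * b = b * a := by
    intro a b ha hb
    open scoped commutatorElement in
    have : ⁅a, b⁆ ∈ derivedSeries ↥Γ (m + 1) :=
      Subgroup.commutator_mem_commutator ha hb
    rw [hA2, Subgroup.mem_bot] at this
    exact commutatorElement_eq_one_iff_commute.mp this
  -- A acts transitively
  have hAtrans : ∀ x y : Fin p, ∃ a : ↥Γ, a ∈ A ∧ a • x = y := by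
    have hAne : ∃ (a : ↥Γ) (x : Fin p), a ∈ A ∧ a • x ≠ x := by
      rcases A.bot_or_exists_ne_one with h | ⟨a, ha, hane⟩
      · exact absurd h hA1
      · by_contra h
        push_neg at h
        exact hane (hfaith a (fun x => h a x ha))
    obtain ⟨a₁, x₁, ha₁A, ha₁⟩ := hAne
    have hblock := MulAction.IsBlock.orbit_of_normal (G := ↥Γ) (X := Fin p) (N := A) x₁
    have hne : (orbit ↥A x₁).Nonempty := ⟨x₁, mem_orbit_self x₁⟩
    have hdvd := hblock.ncard_dvd_card hne
    rw [hcardX] at hdvd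
    have h2 : 1 < (orbit ↥A x₁).ncard := by
      refine (Set.one_lt_ncard_iff (Set.toFinite _)).mpr
        ⟨(⟨a₁, ha₁A⟩ : ↥A) • x₁, x₁, mem_orbit _ _, mem_orbit_self x₁, ha₁⟩
    have hcardorb : (orbit ↥A x₁).ncard = p := by
      rcases (Nat.Prime.eq_one_or_self_of_dvd hp _ hdvd) with h | h
      · omega
      · exact h
    have huniv : orbit ↥A x₁ = Set.univ := by
      refine Set.eq_of_subset_of_ncard_le (Set.subset_univ _) ?_ (Set.toFinite _)
      rw [Set.ncard_univ, hcardX, hcardorb]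
    intro x y
    have hx : x ∈ orbit ↥A x₁ := huniv ▸ Set.mem_univ x
    have hy : y ∈ orbit ↥A x₁ := huniv ▸ Set.mem_univ y
    obtain ⟨u, hu⟩ := hx
    obtain ⟨v, hv⟩ := hy
    refine ⟨(v : ↥Γ) * (u : ↥Γ)⁻¹, A.mul_mem v.2 (A.inv_mem u.2), ?_⟩
    have hu' : (u : ↥Γ) • x₁ = x := hu
    have hv' : (v : ↥Γ) • x₁ = y := hv
    rw [← hu', ← hv', mul_smul, inv_smul_smul]
  -- p divides the order of A
  have x₀ : Fin p := ⟨0, hp.pos⟩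
  have horbA : orbit ↥A x₀ = Set.univ := by
    refine Set.eq_univ_of_forall (fun y => ?_)
    obtain ⟨a, haA, ha⟩ := hAtrans x₀ y
    exact ⟨⟨a, haA⟩, ha⟩
  have hpA : p ∣ Nat.card ↥A := by
    have h1 : (stabilizer ↥A x₀).index = p := by
      rw [MulAction.index_stabilizer, horbA, Set.ncard_univ, hcardX]
    exact dvd_trans (dvd_of_eq h1.symm) (Subgroup.index_dvd_card _)
  -- a generator σ of order p inside A
  obtain ⟨σ', hσ'⟩ : ∃ σ' : ↥A, orderOf σ' = p := by
    rw [Nat.card_eq_fintype_card] at hpA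
    exact exists_prime_orderOf_dvd_card p hpA
  set σ : ↥Γ := (σ' : ↥Γ) with hσdef
  have hσA : σ ∈ A := σ'.2
  have hσord : orderOf σ = p := by
    rw [show σ = A.subtype σ' from rfl, orderOf_injective A.subtype Subtype.coe_injective σ', hσ']
  -- σ as a permutation is a p-cycle with full support
  have hσpermord : orderOf (σ : Equiv.Perm (Fin p)) = p := by
    rw [show (σ : Equiv.Perm (Fin p)) = Γ.subtype σ from rfl,
      orderOf_injective Γ.subtype Subtype.coe_injective σ, hσord]
  have hcycle : Equiv.Perm.IsCycle (σ : Equiv.Perm (Fin p)) := by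
    refine Equiv.Perm.isCycle_of_prime_order'' ?_ ?_ <;>
      simp [hσpermord]
    exact hp
  have hsupp : (σ : Equiv.Perm (Fin p)).support = Finset.univ := by
    refine Finset.eq_univ_of_card _ ?_
    have := hcycle.orderOf
    rw [hσpermord] at this
    simp [← this]
  -- regularity: σ ^ m fixes a point iff p ∣ m
  have hreg : ∀ (m : ℕ) (x : Fin p), σ ^ m • x = x → p ∣ m := by
    intro m x hx
    by_contra hpm
    have hcop : Nat.Coprime m p := Nat.Coprime.symm (hp.coprime_iff_not_dvd.mpr hpm)
    have hsupp' : ((σ : Equiv.Perm (Fin p)) ^ m).support = Finset.univ := by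
      rw [Equiv.Perm.support_pow_coprime (by rw [hσpermord]; exact hcop), hsupp]
    have hx' : ((σ : Equiv.Perm (Fin p)) ^ m) x = x := by
      have h := hx
      have : ((σ ^ m : ↥Γ) : Equiv.Perm (Fin p)) x = x := h
      simpa using this
    have hmem : x ∈ ((σ : Equiv.Perm (Fin p)) ^ m).support := by
      rw [hsupp']; exact Finset.mem_univ x
    rw [Equiv.Perm.mem_support] at hmem
    exact hmem hx'
  haveI hfact1 : Fact (1 < p) := ⟨hp1⟩
  -- congruence lemmas for powers of σ
  have hσpow : ∀ a b : ℕ, (a : ZMod p) = (b : ZMod p) → σ ^ a = σ ^ b := by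
    intro a b hab
    rw [ZMod.natCast_eq_natCast_iff] at hab
    exact pow_eq_pow_iff_modEq.mpr (by rw [hσord]; exact hab)
  have hσpowinj : ∀ a b : ℕ, σ ^ a = σ ^ b → (a : ZMod p) = (b : ZMod p) := by
    intro a b hab
    rw [pow_eq_pow_iff_modEq, hσord] at hab
    rw [ZMod.natCast_eq_natCast_iff]
    exact hab
  have hregZ' : ∀ (a b : ℕ) (x : Fin p), a ≤ b → σ ^ a • x = σ ^ b • x →
      (a : ZMod p) = (b : ZMod p) := by
    intro a b x hab hx
    have hb : b = a + (b - a) := by omega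
    rw [hb, pow_add, mul_smul] at hx
    have h0 : x = σ ^ (b - a) • x := MulAction.injective (σ ^ a) hx
    have hdvd : p ∣ b - a := hreg _ _ h0.symm
    have h1 : ((b - a : ℕ) : ZMod p) = 0 := (ZMod.natCast_eq_zero_iff _ _).mpr hdvd
    rw [Nat.cast_sub hab] at h1
    exact (sub_eq_zero.mp h1).symm
  have hregZ : ∀ (a b : ℕ) (x : Fin p), σ ^ a • x = σ ^ b • x →
      (a : ZMod p) = (b : ZMod p) := by
    intro a b x hx
    rcases le_total a b with h | h
    · exact hregZ' a b x h hx
    · exact (hregZ' b a x h hx.symm).symm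
  -- ⟨σ⟩ acts transitively
  have hregtrans : ∀ x y : Fin p, ∃ i : ℕ, σ ^ i • x = y := by
    intro x y
    have hinj : Function.Injective (fun i : Fin p => σ ^ (i : ℕ) • x) := by
      intro i j hij
      have h1 := hregZ _ _ _ hij
      have h2 : (i : ℕ) % p = (j : ℕ) % p := (ZMod.natCast_eq_natCast_iff _ _ _).mp h1
      rw [Nat.mod_eq_of_lt i.isLt, Nat.mod_eq_of_lt j.isLt] at h2
      exact Fin.ext h2
    obtain ⟨i, hi⟩ := Finite.injective_iff_surjective.mp hinj y
    exact ⟨(i : ℕ), hi⟩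
  -- the centralizer of σ in Γ is ⟨σ⟩
  have hcent : ∀ g : ↥Γ, g * σ = σ * g → g ∈ Subgroup.zpowers σ := by
    intro g hg
    have hcomm : ∀ i : ℕ, g * σ ^ i = σ ^ i * g := fun i => (Commute.pow_right hg i)
    obtain ⟨j, hj⟩ := hregtrans x₀ (g • x₀)
    have hfix : ∀ y : Fin p, ((σ ^ j)⁻¹ * g) • y = y := by
      intro y
      obtain ⟨i, hi⟩ := hregtrans x₀ y
      rw [← hi, smul_smul]
      have hmm : (σ ^ j)⁻¹ * g * σ ^ i = σ ^ i * ((σ ^ j)⁻¹ * g) := by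
        rw [mul_assoc, hcomm i, ← mul_assoc, (((Commute.refl σ).pow_pow j i).inv_left).eq,
          mul_assoc]
      rw [hmm, mul_smul]
      congr 1
      rw [mul_smul, ← hj, inv_smul_smul]
    have h1 : (σ ^ j)⁻¹ * g = 1 := hfaith _ hfix
    have h2 : g = σ ^ j := by
      rw [← inv_mul_eq_one.mp h1]
    rw [h2]
    exact pow_mem (Subgroup.mem_zpowers σ) j
  -- A = ⟨σ⟩
  have hAz : A = Subgroup.zpowers σ :=
    le_antisymm (fun a ha => hcent a (hAab a σ ha hσA)) (Subgroup.zpowers_le.mpr hσA)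
  have hvalcast : ∀ x : ZMod p, ((x.val : ℕ) : ZMod p) = x := fun x => ZMod.natCast_rightInverse x
  -- the conjugation exponent κ
  have hconjZ : ∀ g : ↥Γ, ∃ k : ZMod p, g * σ * g⁻¹ = σ ^ k.val := by
    intro g
    have h1 : g * σ * g⁻¹ ∈ A := hAnormal.conj_mem σ hσA g
    rw [hAz, Subgroup.mem_zpowers_iff] at h1
    obtain ⟨k, hk⟩ := h1
    have hnn : 0 ≤ k % (p : ℤ) := Int.emod_nonneg k (by exact_mod_cast hp.pos.ne')
    refine ⟨(((k % (p : ℤ)).toNat : ℕ) : ZMod p), ?_⟩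
    have h2 : σ ^ ((k % (p : ℤ)).toNat) = σ ^ k := by
      rw [← zpow_natCast, Int.toNat_of_nonneg hnn]
      have h3 := zpow_mod_orderOf σ k
      rwa [hσord] at h3
    rw [← hk, ← h2]
    exact (hσpow _ _ (hvalcast _)).symm
  set κ : ↥Γ → ZMod p := fun g => Classical.choose (hconjZ g) with hκdef
  have hκ : ∀ g : ↥Γ, g * σ * g⁻¹ = σ ^ (κ g).val := fun g => Classical.choose_spec (hconjZ g)
  have hκu : ∀ (g : ↥Γ) (k : ZMod p), g * σ * g⁻¹ = σ ^ k.val → k = κ g := by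
    intro g k hk
    have h1 : σ ^ k.val = σ ^ (κ g).val := by rw [← hk, hκ g]
    have h2 := hσpowinj _ _ h1
    rwa [hvalcast, hvalcast] at h2
  have hκA : ∀ g : ↥Γ, g ∈ A ↔ κ g = 1 := by
    intro g
    constructor
    · intro hgA
      refine (hκu g 1 ?_).symm
      rw [ZMod.val_one, pow_one, hAab g σ hgA hσA, mul_inv_cancel_right]
    · intro hk
      have h1 := hκ g
      rw [hk, ZMod.val_one, pow_one] at h1
      have h2 : g * σ = σ * g := mul_inv_eq_iff_eq_mul.mp h1
      rw [hAz]
      exact hcent g h2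
  have hgi : ∀ (g : ↥Γ) (i : ℕ), g * σ ^ i = σ ^ ((κ g * (i : ZMod p)).val) * g := by
    intro g i
    have h1 : g * σ ^ i * g⁻¹ = (g * σ * g⁻¹) ^ i := by
      simpa [MulAut.conj_apply] using (map_pow (MulAut.conj g) σ i).symm
    have h2 : (g * σ * g⁻¹) ^ i = σ ^ ((κ g * (i : ZMod p)).val) := by
      rw [hκ g, ← pow_mul]
      exact hσpow _ _ (by simp [hvalcast])
    exact mul_inv_eq_iff_eq_mul.mp (h1.trans h2)
  have hmove : ∀ (g : ↥Γ) (i : ℕ) (x : Fin p),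
      g • (σ ^ i • x) = σ ^ ((κ g * (i : ZMod p)).val) • (g • x) := by
    intro g i x
    rw [smul_smul, hgi g i, mul_smul]
  -- uniqueness of fixed points for elements outside A
  have huniq : ∀ (g : ↥Γ), g ∉ A → ∀ x y : Fin p, g • x = x → g • y = y → y = x := by
    intro g hgA x y hx hy
    obtain ⟨i, hi⟩ := hregtrans x y
    rw [← hi, hmove g i x, hx] at hy
    have h1 := hregZ _ _ _ hy
    rw [hvalcast] at h1
    have hk1 : κ g ≠ 1 := fun h => hgA ((hκA g).mpr h)
    have h2 : (i : ZMod p) = 0 := by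
      by_contra h0
      exact hk1 (mul_right_cancel₀ h0 (by rw [h1, one_mul]))
    have h3 : σ ^ i = σ ^ 0 := hσpow _ _ (by rw [h2]; simp)
    rw [← hi, h3, pow_zero, one_smul]
  -- existence of fixed points for elements outside A
  have hexfix : ∀ g : ↥Γ, g ∉ A → ∃ x : Fin p, g • x = x := by
    intro g hgA
    have hk1 : κ g ≠ 1 := fun h => hgA ((hκA g).mpr h)
    have hne : (1 : ZMod p) - κ g ≠ 0 := sub_ne_zero.mpr (Ne.symm hk1)
    obtain ⟨c, hc⟩ := hregtrans x₀ (g • x₀)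
    set I : ZMod p := (c : ZMod p) * ((1 : ZMod p) - κ g)⁻¹ with hI
    have key : κ g * I + (c : ZMod p) = I := by
      rw [hI]
      field_simp
      ring
    refine ⟨σ ^ I.val • x₀, ?_⟩
    rw [hmove g I.val x₀, ← hc, smul_smul, ← pow_add]
    refine congrArg (fun t => t • x₀) (hσpow _ _ ?_)
    simp only [Nat.cast_add, hvalcast]
    exact key
  -- cardinality bookkeeping
  have hstabindex : ∀ x : Fin p, (stabilizer ↥Γ x).index = p := by
    intro x
    rw [index_stabilizer_of_transitive, hcardX]
  have hcard_of_index : ∀ K : Subgroup ↥Γ, K.index = p →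
      Nat.card K = Nat.card (stabilizer ↥Γ x₀) := by
    intro K hK
    have h1 := Subgroup.index_mul_card K
    have h2 := Subgroup.index_mul_card (stabilizer ↥Γ x₀)
    rw [hK] at h1
    rw [hstabindex x₀] at h2
    exact Nat.eq_of_mul_eq_mul_left hp.pos (h1.trans h2.symm)
  have hpnotdvd : ∀ K : Subgroup ↥Γ, K.index = p → ¬ p ∣ Nat.card K := by
    intro K hK hdvd
    have h1 : Nat.card ↥Γ ∣ Nat.card (Equiv.Perm (Fin p)) := Subgroup.card_subgroup_dvd_card Γ
    have h2 : Nat.card (Equiv.Perm (Fin p)) = p.factorial := by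
      rw [Nat.card_eq_fintype_card, Fintype.card_perm, Fintype.card_fin]
    have h3 : K.index * Nat.card K = Nat.card ↥Γ := Subgroup.index_mul_card K
    obtain ⟨e, he⟩ := hdvd
    have h4 : p * p ∣ p.factorial := by
      rw [← h2]
      refine dvd_trans ?_ h1
      rw [← h3, hK, he]
      exact ⟨e, by ring⟩
    have hfac : p * (p - 1).factorial = p.factorial := Nat.mul_factorial_pred hp.pos.ne'
    rw [← hfac] at h4
    have h5 : p ∣ (p - 1).factorial := (mul_dvd_mul_iff_left hp.pos.ne').mp h4
    rw [Nat.Prime.dvd_factorial hp] at h5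
    omega
  -- index-p subgroups meet A trivially
  have hHA : ∀ (K : Subgroup ↥Γ), K.index = p → ∀ g : ↥Γ, g ∈ K → g ∈ A → g = 1 := by
    intro K hK g hgK hgA
    by_contra hg1
    have hord : orderOf g = p := by
      have hdvd : orderOf g ∣ p := by
        rw [hAz] at hgA
        have hh : orderOf g ∣ orderOf σ := orderOf_dvd_of_mem_zpowers hgA
        rwa [hσord] at hh
      rcases Nat.Prime.eq_one_or_self_of_dvd hp _ hdvd with h | h
      · exact absurd (orderOf_eq_one_iff.mp h) hg1
      · exact h
    have hdvd2 : p ∣ Nat.card K := by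
      have h1 : orderOf (K.subtype ⟨g, hgK⟩) = orderOf (⟨g, hgK⟩ : ↥K) :=
        orderOf_injective K.subtype Subtype.coe_injective ⟨g, hgK⟩
      have h2 : orderOf (⟨g, hgK⟩ : ↥K) ∣ Nat.card K := orderOf_dvd_natCard _
      rw [← h1] at h2
      have h3 : K.subtype ⟨g, hgK⟩ = g := rfl
      rwa [h3, hord] at h2
    exact hpnotdvd K hK hdvd2
  -- the stabilizer of x₀ is nontrivial
  have hd2 : 1 < Nat.card (stabilizer ↥Γ x₀) := by
    by_contra hle
    push_neg at hle
    have hpos : 0 < Nat.card (stabilizer ↥Γ x₀) := Nat.card_pos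
    have h1 : Nat.card (stabilizer ↥Γ x₀) = 1 := by omega
    have hΓp : Nat.card ↥Γ = p := by
      rw [← Subgroup.index_mul_card (stabilizer ↥Γ x₀), hstabindex x₀, h1, mul_one]
    have hcA : Nat.card ↥A = p := by
      have hh := Subgroup.card_subgroup_dvd_card A
      rw [hΓp] at hh
      exact Nat.dvd_antisymm hh hpA
    have hAtop : A = ⊤ := Subgroup.eq_top_of_card_eq _ (by rw [hcA, hΓp])
    exact hab (hAab a₀ b₀ (hAtop ▸ Subgroup.mem_top a₀) (hAtop ▸ Subgroup.mem_top b₀))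
  -- every subgroup of index p is a stabilizer
  have hstab_eq : ∀ K : Subgroup ↥Γ, K.index = p → ∃ x : Fin p, K = stabilizer ↥Γ x := by
    intro K hK
    have hmul : ∀ a b : ↥Γ, κ (a * b) = κ a * κ b := by
      intro a b
      refine (hκu (a * b) (κ a * κ b) ?_).symm
      have h1 : (a * b) * σ * (a * b)⁻¹ = a * (b * σ * b⁻¹) * a⁻¹ := by
        simp [mul_assoc]
      rw [h1, hκ b, hgi a ((κ b).val), mul_assoc, mul_inv_cancel, mul_one]
      exact hσpow _ _ (by simp [hvalcast])
    have hone : κ (1 : ↥Γ) = 1 := by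
      refine (hκu 1 1 ?_).symm
      rw [ZMod.val_one, pow_one]
      simp
    have hinjκ : Function.Injective (fun h : ↥K => κ (h : ↥Γ)) := by
      intro a b hab2
      simp only at hab2
      have h1 : (a : ↥Γ) * σ * (a : ↥Γ)⁻¹ = (b : ↥Γ) * σ * (b : ↥Γ)⁻¹ := by
        rw [hκ, hκ, hab2]
      have h2 : ((b : ↥Γ)⁻¹ * (a : ↥Γ)) * σ * ((b : ↥Γ)⁻¹ * (a : ↥Γ))⁻¹ = σ := by
        have h3 := congrArg (fun t => (b : ↥Γ)⁻¹ * t * (b : ↥Γ)) h1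
        simp only [mul_assoc, mul_inv_rev, inv_inv] at h3 ⊢
        simpa using h3
      have h4 : ((b : ↥Γ)⁻¹ * (a : ↥Γ)) * σ = σ * ((b : ↥Γ)⁻¹ * (a : ↥Γ)) :=
        mul_inv_eq_iff_eq_mul.mp h2
      have h5 : (b : ↥Γ)⁻¹ * (a : ↥Γ) ∈ A := hAz ▸ hcent _ h4
      have h6 : (b : ↥Γ)⁻¹ * (a : ↥Γ) ∈ K := K.mul_mem (K.inv_mem b.2) a.2
      have h7 := hHA K hK _ h6 h5
      exact (Subtype.ext (inv_mul_eq_one.mp h7)).symm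
    haveI : IsCyclic ↥K := by
      refine isCyclic_of_subgroup_isDomain
        (⟨⟨fun h : ↥K => κ (h : ↥Γ), hone⟩, fun a b => hmul _ _⟩ : ↥K →* ZMod p) hinjκ
    obtain ⟨gen, hgen⟩ := IsCyclic.exists_generator (α := ↥K)
    have hcardK : Nat.card ↥K = Nat.card (stabilizer ↥Γ x₀) := hcard_of_index K hK
    have hgen1 : (gen : ↥Γ) ≠ 1 := by
      intro h
      have hgeq : gen = (1 : ↥K) := Subtype.ext h
      have hsub : ∀ x : ↥K, x = 1 := by
        intro x
        obtain ⟨z, hz⟩ := Subgroup.mem_zpowers_iff.mp (hgen x)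
        rw [hgeq] at hz
        simpa using hz.symm
      have hcard1 : Nat.card ↥K = 1 := by
        rw [Nat.card_eq_one_iff_unique]
        exact ⟨⟨fun a b => by rw [hsub a, hsub b]⟩, ⟨1⟩⟩
      omega
    have hgenA : (gen : ↥Γ) ∉ A := fun h => hgen1 (hHA K hK _ gen.2 h)
    obtain ⟨x, hx⟩ := hexfix _ hgenA
    have hle : K ≤ stabilizer ↥Γ x := by
      intro g hg
      obtain ⟨z, hz⟩ := Subgroup.mem_zpowers_iff.mp (hgen ⟨g, hg⟩)
      have hgz : g = ((gen : ↥Γ)) ^ z := by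
        have := congrArg (fun t : ↥K => (t : ↥Γ)) hz
        simpa using this.symm
      have hgenmem : (gen : ↥Γ) ∈ stabilizer ↥Γ x := hx
      rw [hgz]
      exact Subgroup.zpow_mem _ hgenmem z
    refine ⟨x, Subgroup.eq_of_le_of_card_ge hle ?_⟩
    rw [hcardK, hcard_of_index (stabilizer ↥Γ x) (hstabindex x)]
  -- the bijection x ↦ stabilizer x
  have hbij : Function.Bijective (fun x : Fin p =>
      (⟨stabilizer ↥Γ x, hstabindex x⟩ : {H : Subgroup ↥Γ // H.index = p})) := by
    constructor
    · intro x y hxy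
      simp only [Subtype.mk_eq_mk] at hxy
      rcases (stabilizer ↥Γ x).bot_or_exists_ne_one with hbot | ⟨g, hg, hg1⟩
      · exfalso
        have h1 : Nat.card (stabilizer ↥Γ x) = 1 := by rw [hbot]; simp
        have h2 := hcard_of_index (stabilizer ↥Γ x) (hstabindex x)
        omega
      · have hgA : g ∉ A := fun h => hg1 (hHA (stabilizer ↥Γ x) (hstabindex x) g hg h)
        have hgy : g ∈ stabilizer ↥Γ y := hxy ▸ hg
        exact (huniq g hgA x y hg hgy).symm
    · rintro ⟨K, hK⟩
      obtain ⟨x, hx⟩ := hstab_eq K hK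
      exact ⟨x, by simp [hx]⟩
  have hfin := Nat.card_eq_of_bijective _ hbij
  rw [← hfin, hcardX]
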